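/- arXiv:2505.21819 — 3 statements merged into one kernel-verified Lean document; each statement's English description precedes it below -/
import Mathlib

section
/- Let p be a probability mass function on ℕ and let S ⊆ ℕ be a set whose complement Sᶜ is finite. If ∑_{i ∈ S} p(i) > α · |Sᶜ| for some α ≥ 0, then there is no probability mass function q on ℕ such that q(i) = 0 for all i ∈ S and |q(i) - p(i)| ≤ α for all i ∈ ℕ. -/
theorem stmt1 (p : ℕ → ℝ) (hpnn : ∀ i, 0 ≤ p i) (hpsum : ∑' i, p i = 1)
    (S : Set ℕ) (hfin : Sᶜ.Finite) (α : ℝ) (hα : 0 ≤ α)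
    (hmass : α * (Sᶜ.ncard : ℝ) < ∑' i : S, p i) :
    ¬ ∃ q : ℕ → ℝ, (∀ i, 0 ≤ q i) ∧ (∑' i, q i = 1) ∧
      (∀ i ∈ S, q i = 0) ∧ (∀ i, |q i - p i| ≤ α) := by
  rintro ⟨q, hq0, hq1, hqS, hqd⟩
  have hp : Summable p := by
    by_contra h
    rw [tsum_eq_zero_of_not_summable h] at hpsum
    norm_num at hpsum
  set F := hfin.toFinset with hF
  -- q is supported on F
  have hqsupp : ∀ i ∉ F, q i = 0 := by
    intro i hi
    exact hqS i (by simpa [hF, Set.Finite.mem_toFinset] using hi)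
  have hqsum : ∑' i, q i = ∑ i ∈ F, q i := tsum_eq_sum hqsupp
  -- tsum over Sᶜ of p equals finite sum
  have hpScompl : ∑' i : ↥Sᶜ, p i = ∑ i ∈ F, p i := by
    rw [← hfin.coe_toFinset]
    exact Finset.tsum_subtype F p
  -- split tsum of p
  have hsplit : (∑' i : S, p i) + ∑' i : ↥Sᶜ, p i = 1 := by
    rw [← hpsum]
    exact Summable.tsum_add_tsum_compl (hp.subtype _) (hp.subtype _)
  -- bound each q i on F
  have hbound : ∑ i ∈ F, q i ≤ ∑ i ∈ F, (p i + α) := by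
    apply Finset.sum_le_sum
    intro i _
    have := hqd i
    have := abs_le.mp this
    linarith [this.1, this.2]
  have hcard : (F.card : ℝ) = (Sᶜ.ncard : ℝ) := by
    norm_cast
    exact (Set.ncard_eq_toFinset_card _ hfin).symm
  have : (1 : ℝ) ≤ ∑ i ∈ F, p i + α * (Sᶜ.ncard : ℝ) := by
    have h1 : (1 : ℝ) = ∑ i ∈ F, q i := by rw [← hq1, hqsum]
    rw [h1]
    calc ∑ i ∈ F, q i ≤ ∑ i ∈ F, (p i + α) := hbound
      _ = ∑ i ∈ F, p i + F.card * α := by rw [Finset.sum_add_distrib, Finset.sum_const, nsmul_eq_mul]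
      _ = ∑ i ∈ F, p i + α * (Sᶜ.ncard : ℝ) := by rw [← hcard]; ring
  have hps : ∑ i ∈ F, p i = 1 - ∑' i : S, p i := by
    rw [← hpScompl]; linarith
  rw [hps] at this
  linarith
end

section
/- Let p be a probability mass function on ℕ, let S ⊆ ℕ, and let α > 0. Suppose (1) p(i) ≤ α for every i ∈ S, and (2) ∑_{i ∈ S} p(i) ≤ α · |ℕ \ S| (where the right-hand side is interpreted as +∞ if ℕ \ S is infinite, and S ≠ ℕ). Then there exists a probability mass function q on ℕ with q(i) = 0 for all i ∈ S and |q(i) - p(i)| ≤ α for all i ∈ ℕ. -/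
theorem stmt2 (p : ℕ → ℝ) (hpnn : ∀ i, 0 ≤ p i) (hpsum : ∑' i, p i = 1)
    (S : Set ℕ) (α : ℝ) (hα : 0 < α)
    (h1 : ∀ i ∈ S, p i ≤ α)
    (hSne : S ≠ Set.univ)
    (h2 : Sᶜ.Finite → ∑' i : S, p i ≤ α * (Sᶜ.ncard : ℝ)) :
    ∃ q : ℕ → ℝ, (∀ i, 0 ≤ q i) ∧ (∑' i, q i = 1) ∧
      (∀ i ∈ S, q i = 0) ∧ (∀ i, |q i - p i| ≤ α) := by
  have hp : Summable p := by
    by_contra h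
    simp [tsum_eq_zero_of_not_summable h] at hpsum
  set M : ℝ := ∑' i : S, p i with hM
  have hMnn : 0 ≤ M := tsum_nonneg fun i => hpnn i
  have hsplit : M + ∑' i : ↥Sᶜ, p i = 1 := by
    rw [hM, Summable.tsum_add_tsum_compl (hp.subtype S) (hp.subtype Sᶜ), hpsum]
  have hM1 : M ≤ 1 := by
    nlinarith [tsum_nonneg (L := SummationFilter.unconditional _) (fun i : ↥Sᶜ => hpnn i)]
  -- obtain a nonempty finset T ⊆ Sᶜ with M ≤ α * T.card
  obtain ⟨T, hTsub, hTne, hTcard⟩ :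
      ∃ T : Finset ℕ, ↑T ⊆ Sᶜ ∧ T.Nonempty ∧ M ≤ α * T.card := by
    by_cases hfin : Sᶜ.Finite
    · refine ⟨hfin.toFinset, by simp, ?_, ?_⟩
      · rw [Finset.nonempty_iff_ne_empty]
        intro h
        apply hSne
        have : Sᶜ = ∅ := by simpa using h
        simpa [Set.compl_empty_iff] using this
      · have := h2 hfin
        rwa [Set.ncard_eq_toFinset_card _ hfin] at this
    · have hinf : Sᶜ.Infinite := hfin
      obtain ⟨T, hTsub, hTcard⟩ := hinf.exists_subset_card_eq (⌈M / α⌉₊ + 1)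
      refine ⟨T, hTsub, by simp [Finset.card_pos.symm, hTcard], ?_⟩
      rw [hTcard]
      have h1 : M / α ≤ (⌈M / α⌉₊ : ℝ) := Nat.le_ceil _
      have : (⌈M / α⌉₊ : ℝ) ≤ ((⌈M / α⌉₊ + 1 : ℕ) : ℝ) := by push_cast; linarith
      calc M = α * (M / α) := by field_simp
        _ ≤ α * ((⌈M / α⌉₊ + 1 : ℕ) : ℝ) := by
            apply mul_le_mul_of_nonneg_left (by linarith) hα.le
  have hTpos : (0 : ℝ) < T.card := by exact_mod_cast Finset.card_pos.mpr hTne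
  set c : ℝ := M / T.card with hc
  have hcnn : 0 ≤ c := div_nonneg hMnn hTpos.le
  have hcα : c ≤ α := by
    rw [hc, div_le_iff₀ hTpos]
    linarith [hTcard]
  refine ⟨fun i => Sᶜ.indicator p i + Set.indicator ↑T (fun _ => c) i, ?_, ?_, ?_, ?_⟩
  · intro i
    have := Set.indicator_nonneg (fun i _ => hpnn i) (s := Sᶜ) i
    have := Set.indicator_nonneg (fun _ _ => hcnn) (s := (↑T : Set ℕ)) i
    positivity
  · have hs1 : Summable (Sᶜ.indicator p) := hp.indicator _
    have hs2 : Summable (Set.indicator (↑T : Set ℕ) fun _ => c) := by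
      apply summable_of_ne_finset_zero (s := T)
      intro i hi
      simp [Set.indicator_of_notMem, hi]
    rw [Summable.tsum_add hs1 hs2]
    have e1 : ∑' i, Sᶜ.indicator p i = ∑' i : ↥Sᶜ, p i := (tsum_subtype Sᶜ p).symm
    have e2 : ∑' i, Set.indicator (↑T : Set ℕ) (fun _ => c) i = M := by
      rw [tsum_eq_sum (s := T) (by intro i hi; simp [Set.indicator_of_notMem, hi])]
      rw [Finset.sum_congr rfl (fun i hi => Set.indicator_of_mem (by exact_mod_cast hi) _)]
      rw [Finset.sum_const, nsmul_eq_mul, hc]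
      field_simp
    rw [e1, e2]
    linarith
  · intro i hi
    have h1 : Sᶜ.indicator p i = 0 := Set.indicator_of_notMem (by simpa using hi) _
    have h2 : Set.indicator (↑T : Set ℕ) (fun _ => c) i = 0 :=
      Set.indicator_of_notMem (fun h => (hTsub h) hi) _
    simp [h1, h2]
  · intro i
    by_cases hi : i ∈ S
    · have hz1 : Sᶜ.indicator p i = 0 := Set.indicator_of_notMem (by simpa using hi) _
      have hz2 : Set.indicator (↑T : Set ℕ) (fun _ => c) i = 0 :=
        Set.indicator_of_notMem (fun h => (hTsub h) hi) _
      simp only [hz1, hz2]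
      rw [abs_le]
      constructor <;> [linarith [h1 i hi]; linarith [hpnn i]]
    · have h1' : Sᶜ.indicator p i = p i :=
        Set.indicator_of_mem (show i ∈ Sᶜ from hi) _
      simp only [h1']
      by_cases hiT : i ∈ T
      · rw [Set.indicator_of_mem (show i ∈ (↑T : Set ℕ) from hiT) _]
        rw [abs_le]
        constructor <;> linarith
      · rw [Set.indicator_of_notMem (show i ∉ (↑T : Set ℕ) from hiT) _]
        simp [abs_le, hα.le, hα]
end

section
/- Let X be a countable set, H = {h₁, h₂, …} a countable family of functions X → {0,1}, and fix h = h_n ∈ H. Let x₁, x₂, … be an enumeration of supp(h) = {x : h(x)=1}. Then there exists t ∈ ℕ with t ≥ n such that for all s ≥ t: {x₁,…,x_s} ⊆ supp(h), and for every i < n with {x₁,…,x_s} ⊆ supp(h_i), we have supp(h) ⊆ supp(h_i). In other words, h is a critical hypothesis at every step s ≥ t. -/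
theorem stmt5 {X : Type*} [Countable X] (h : ℕ → X → Bool) (n : ℕ) (x : ℕ → X)
    (henum : Set.range x = {y | h n y = true}) :
    ∃ t : ℕ, n ≤ t ∧ ∀ s, t ≤ s →
      ((∀ j < s, h n (x j) = true) ∧
        ∀ i < n, (∀ j < s, h i (x j) = true) →
          {y | h n y = true} ⊆ {y | h i y = true}) := by
  have hx : ∀ j, h n (x j) = true := by
    intro j
    have : x j ∈ Set.range x := ⟨j, rfl⟩
    rwa [henum] at this
  have key : ∀ i, ∃ j, ¬ ({y | h n y = true} ⊆ {y | h i y = true}) → h i (x j) = false := by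
    intro i
    by_cases hc : {y | h n y = true} ⊆ {y | h i y = true}
    · exact ⟨0, fun hn => absurd hc hn⟩
    · obtain ⟨y, hy1, hy2⟩ := Set.not_subset.mp hc
      have hy : y ∈ Set.range x := by rwa [henum]
      obtain ⟨j, rfl⟩ := hy
      exact ⟨j, fun _ => by simpa using hy2⟩
  choose f hf using key
  refine ⟨max n ((Finset.range n).sup f + 1), le_max_left _ _, ?_⟩
  intro s hs
  refine ⟨fun j _ => hx j, ?_⟩
  intro i hi hall
  by_contra hc
  have hj := hf i hc
  have h1 : f i ≤ (Finset.range n).sup f := Finset.le_sup (Finset.mem_range.mpr hi)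
  have h2 : (Finset.range n).sup f + 1 ≤ s := le_trans (le_max_right _ _) hs
  have := hall (f i) (by omega)
  rw [hj] at this
  exact Bool.noConfusion this
end
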